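/- The flood polynomials of cycle graphs satisfy: F_{O_3}(x) = x³ + 3x², F_{O_4}(x) = x⁴ + 4x³ + 2x², and for n ≥ 5, F_{O_n}(x) = x·F_{O_{n-1}}(x) + x·F_{O_{n-2}}(x). -/

import Mathlib

open scoped Classical
open Polynomial

/-- One step of the cascade sequence: add all vertices having at least two
neighbors in the current set. -/
noncomputable def floodStep {V : Type*} (G : SimpleGraph V) [Fintype V]
    (C : Finset V) : Finset V :=
  C ∪ Finset.univ.filter (fun x => 2 ≤ (C.filter (fun y => G.Adj x y)).card)

/-- `C` completely floods `G`: the cascade sequence stabilizes to all of `V`.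
Since `floodStep` is inflationary, this is equivalent to some iterate being `univ`. -/
def Floods {V : Type*} (G : SimpleGraph V) [Fintype V] (C : Finset V) : Prop :=
  ∃ k, (floodStep G)^[k] C = Finset.univ

/-- The flood polynomial of `G`. -/
noncomputable def floodPoly {V : Type*} (G : SimpleGraph V) [Fintype V] :
    Polynomial ℕ :=
  ∑ C ∈ Finset.univ.filter (fun C : Finset V => Floods G C), Polynomial.X ^ C.card

/-- The degree of a vertex. -/
noncomputable def deg {V : Type*} (G : SimpleGraph V) [Fintype V] (v : V) : ℕ :=
  (Finset.univ.filter (fun y => G.Adj v y)).card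

open Finset

def covP {k : ℕ} (C : Finset (Fin (k+1))) : Prop := ∀ i, i ∈ C ∨ i + 1 ∈ C

instance {k : ℕ} (C : Finset (Fin (k+1))) : Decidable (covP C) :=
  inferInstanceAs (Decidable (∀ i, i ∈ C ∨ i + 1 ∈ C))

noncomputable def g (n : ℕ) : Polynomial ℕ :=
  ∑ C ∈ univ.filter (fun C : Finset (Fin (n+3)) => covP C), Polynomial.X ^ C.card

lemma two_ne_zero_fin (m : ℕ) : (2 : Fin (m+3)) ≠ 0 := by
  intro h
  have h2 : ((2 : Fin (m+3))).val = 2 % (m+3) := rfl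
  rw [h, Nat.mod_eq_of_lt (by omega)] at h2
  simp at h2

lemma adj_iff {m : ℕ} (x y : Fin (m+3)) :
    (SimpleGraph.cycleGraph (m+3)).Adj x y ↔ y = x - 1 ∨ y = x + 1 := by
  rw [SimpleGraph.cycleGraph_adj (n := m+1)]
  constructor
  · rintro (h | h)
    · left
      have := sub_sub_cancel x y
      rw [h] at this
      exact this.symm
    · right
      rw [sub_eq_iff_eq_add] at h
      rw [h]; open Fin.CommRing in ring
  · rintro (rfl | rfl)
    · left; exact sub_sub_cancel x 1
    · right; exact add_sub_cancel_left x 1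

lemma card_filter_ge {m : ℕ} {C : Finset (Fin (m+3))} {x : Fin (m+3)}
    (h1 : x - 1 ∈ C) (h2 : x + 1 ∈ C)
    (inst : DecidablePred fun y => (SimpleGraph.cycleGraph (m+3)).Adj x y) :
    2 ≤ (@Finset.filter _ _ inst C).card := by
  have hne : x - 1 ≠ x + 1 := by
    intro he
    apply two_ne_zero_fin m
    have h2' : (x+1) - (x-1) = 2 := by open Fin.CommRing in ring
    rw [← h2', he, sub_self]
  have hs : ({x-1, x+1} : Finset (Fin (m+3))) ⊆ @Finset.filter _ _ inst C := by
    intro y hy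
    rw [Finset.mem_insert, Finset.mem_singleton] at hy
    rw [Finset.mem_filter]
    rcases hy with rfl | rfl
    · exact ⟨h1, (adj_iff x _).2 (Or.inl rfl)⟩
    · exact ⟨h2, (adj_iff x _).2 (Or.inr rfl)⟩
  calc 2 = ({x-1, x+1} : Finset (Fin (m+3))).card := (Finset.card_pair hne).symm
    _ ≤ _ := Finset.card_le_card hs

lemma card_filter_le {m : ℕ} {C : Finset (Fin (m+3))} {x : Fin (m+3)}
    (h : x + 1 ∉ C)
    (inst : DecidablePred fun y => (SimpleGraph.cycleGraph (m+3)).Adj x y) :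
    (@Finset.filter _ _ inst C).card ≤ 1 := by
  have hs : @Finset.filter _ _ inst C ⊆ {x - 1} := by
    intro y hy
    rw [Finset.mem_filter] at hy
    rw [Finset.mem_singleton]
    rcases (adj_iff x y).1 hy.2 with rfl | rfl
    · rfl
    · exact absurd hy.1 h
  simpa using Finset.card_le_card hs

lemma card_filter_le' {m : ℕ} {C : Finset (Fin (m+3))} {x : Fin (m+3)}
    (h : x - 1 ∉ C)
    (inst : DecidablePred fun y => (SimpleGraph.cycleGraph (m+3)).Adj x y) :
    (@Finset.filter _ _ inst C).card ≤ 1 := by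
  have hs : @Finset.filter _ _ inst C ⊆ {x + 1} := by
    intro y hy
    rw [Finset.mem_filter] at hy
    rw [Finset.mem_singleton]
    rcases (adj_iff x y).1 hy.2 with rfl | rfl
    · exact absurd hy.1 h
    · rfl
  simpa using Finset.card_le_card hs

lemma cov_floods {m : ℕ} (C : Finset (Fin (m+3))) (h : covP C) :
    Floods (SimpleGraph.cycleGraph (m+3)) C := by
  refine ⟨1, ?_⟩
  simp only [Function.iterate_one]
  apply Finset.eq_univ_of_forall
  intro x
  unfold floodStep
  rw [@Finset.mem_union]
  by_cases hx : x ∈ C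
  · exact Or.inl hx
  · right
    rw [Finset.mem_filter]
    refine ⟨Finset.mem_univ _, ?_⟩
    have h1 : x - 1 ∈ C := by
      rcases h (x-1) with h' | h'
      · exact h'
      · rw [sub_add_cancel] at h'; exact absurd h' hx
    have h2 : x + 1 ∈ C := (h x).resolve_left hx
    exact card_filter_ge h1 h2 _

lemma not_cov_step {m : ℕ} {C : Finset (Fin (m+3))} {i : Fin (m+3)}
    (h1 : i ∉ C) (h2 : i + 1 ∉ C) :
    i ∉ floodStep (SimpleGraph.cycleGraph (m+3)) C ∧
      i + 1 ∉ floodStep (SimpleGraph.cycleGraph (m+3)) C := by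
  constructor
  · intro hmem
    unfold floodStep at hmem
    rw [@Finset.mem_union, Finset.mem_filter] at hmem
    rcases hmem with h | h
    · exact h1 h
    · exact absurd h.2 (Nat.not_le.2 (lt_of_le_of_lt (card_filter_le h2 _) one_lt_two))
  · intro hmem
    unfold floodStep at hmem
    rw [@Finset.mem_union, Finset.mem_filter] at hmem
    rcases hmem with h | h
    · exact h2 h
    · exact absurd h.2 (Nat.not_le.2 (lt_of_le_of_lt
        (card_filter_le' (x := i+1) (C := C) (by rw [add_sub_cancel_right]; exact h1) _)
        one_lt_two))

lemma floods_cov {m : ℕ} (C : Finset (Fin (m+3))) (h : Floods (SimpleGraph.cycleGraph (m+3)) C) :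
    covP C := by
  by_contra hc
  unfold covP at hc
  push_neg at hc
  obtain ⟨i, hi1, hi2⟩ := hc
  obtain ⟨k, hk⟩ := h
  have key : ∀ j, i ∉ (floodStep (SimpleGraph.cycleGraph (m+3)))^[j] C ∧
      i + 1 ∉ (floodStep (SimpleGraph.cycleGraph (m+3)))^[j] C := by
    intro j
    induction j with
    | zero => exact ⟨hi1, hi2⟩
    | succ j ih =>
      rw [Function.iterate_succ_apply']
      exact not_cov_step ih.1 ih.2
  have := (key k).1
  rw [hk] at this
  exact this (Finset.mem_univ _)

lemma floods_iff_cov {m : ℕ} (C : Finset (Fin (m+3))) :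
    Floods (SimpleGraph.cycleGraph (m+3)) C ↔ covP C :=
  ⟨floods_cov C, cov_floods C⟩

lemma floodPoly_eq_g (m : ℕ) : floodPoly (SimpleGraph.cycleGraph (m+3)) = g m := by
  unfold floodPoly g
  congr 1
  exact Finset.filter_congr (fun C _ => floods_iff_cov C)

lemma g0 : g 0 = X^3 + 3*X^2 := by
  unfold g
  rw [show (univ.filter (fun C : Finset (Fin 3) => covP C)) =
    {{0,1,2}, {0,1}, {0,2}, {1,2}} from by decide]
  rw [Finset.sum_insert (by decide), Finset.sum_insert (by decide),
    Finset.sum_insert (by decide), Finset.sum_singleton]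
  norm_num [show ({0,1,2} : Finset (Fin 3)).card = 3 from rfl,
    show ({0,1} : Finset (Fin 3)).card = 2 from rfl,
    show ({0,2} : Finset (Fin 3)).card = 2 from rfl,
    show ({1,2} : Finset (Fin 3)).card = 2 from rfl]
  ring

lemma g1 : g 1 = X^4 + 4*X^3 + 2*X^2 := by
  unfold g
  rw [show (univ.filter (fun C : Finset (Fin 4) => covP C)) =
    {{0,1,2,3}, {0,1,2}, {0,1,3}, {0,2,3}, {1,2,3}, {0,2}, {1,3}} from by decide]
  rw [Finset.sum_insert (by decide), Finset.sum_insert (by decide),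
    Finset.sum_insert (by decide), Finset.sum_insert (by decide),
    Finset.sum_insert (by decide), Finset.sum_insert (by decide), Finset.sum_singleton]
  norm_num [show ({0,1,2,3} : Finset (Fin 4)).card = 4 from rfl,
    show ({0,1,2} : Finset (Fin 4)).card = 3 from rfl,
    show ({0,1,3} : Finset (Fin 4)).card = 3 from rfl,
    show ({0,2,3} : Finset (Fin 4)).card = 3 from rfl,
    show ({1,2,3} : Finset (Fin 4)).card = 3 from rfl,
    show ({0,2} : Finset (Fin 4)).card = 2 from rfl,
    show ({1,3} : Finset (Fin 4)).card = 2 from rfl]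
  ring

lemma mk_add_one {k : ℕ} (a : ℕ) (h1 : a < k+1) (h2 : a + 1 < k + 1) :
    (⟨a, h1⟩ : Fin (k+1)) + 1 = ⟨a+1, h2⟩ := by
  rw [Fin.add_def]
  congr 1
  have hone : (1 : Fin (k+1)).val = 1 := by
    rw [Fin.val_one']
    exact Nat.mod_eq_of_lt (by omega)
  rw [hone]
  exact Nat.mod_eq_of_lt h2

lemma mk_last_add_one {k : ℕ} : (⟨k, Nat.lt_succ_self k⟩ : Fin (k+1)) + 1 = 0 := by
  rw [Fin.add_def]
  ext
  simp only [Fin.val_zero]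
  match k with
  | 0 => rfl
  | k+1 =>
    have hone : (1 : Fin (k+2)).val = 1 := by
      rw [Fin.val_one']
      exact Nat.mod_eq_of_lt (by omega)
    rw [hone]
    exact Nat.mod_self _

lemma covP_elim {k : ℕ} {C : Finset (Fin (k+1))} (h : covP C) (a : ℕ)
    (h1 : a < k+1) (h2 : a+1 < k+1) :
    (⟨a, h1⟩ : Fin (k+1)) ∈ C ∨ (⟨a+1, h2⟩ : Fin (k+1)) ∈ C := by
  have := h ⟨a, h1⟩
  rwa [mk_add_one a h1 h2] at this

lemma covP_elim_last {k : ℕ} {C : Finset (Fin (k+1))} (h : covP C) :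
    (⟨k, Nat.lt_succ_self k⟩ : Fin (k+1)) ∈ C ∨ (0 : Fin (k+1)) ∈ C := by
  have := h ⟨k, Nat.lt_succ_self k⟩
  rwa [mk_last_add_one] at this

lemma covP_intro {k : ℕ} {C : Finset (Fin (k+1))}
    (h : ∀ a (h1 : a < k+1) (h2 : a+1 < k+1), (⟨a, h1⟩ : Fin (k+1)) ∈ C ∨ (⟨a+1, h2⟩ : Fin (k+1)) ∈ C)
    (hlast : (⟨k, Nat.lt_succ_self k⟩ : Fin (k+1)) ∈ C ∨ (0 : Fin (k+1)) ∈ C) :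
    covP C := by
  intro i
  obtain ⟨a, ha⟩ := i
  rcases Nat.lt_or_ge a k with h' | h'
  · rw [mk_add_one a ha (by omega)]
    exact h a ha (by omega)
  · have : a = k := by omega
    subst this
    rw [mk_last_add_one]
    exact hlast

lemma mem_map_castLE {k l : ℕ} (hkl : k ≤ l) (t : Finset (Fin k)) (a : ℕ) (ha : a < l) :
    ((⟨a, ha⟩ : Fin l) ∈ t.map (Fin.castLEEmb hkl)) ↔ ∃ h' : a < k, (⟨a, h'⟩ : Fin k) ∈ t := by
  simp only [Finset.mem_map, Fin.castLEEmb_apply]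
  constructor
  · rintro ⟨j, hj, hje⟩
    have hv : j.val = a := by
      have := congrArg Fin.val hje
      simpa using this
    obtain ⟨jv, hjlt⟩ := j
    simp only at hv
    subst hv
    exact ⟨hjlt, hj⟩
  · rintro ⟨h', ht⟩
    exact ⟨⟨a, h'⟩, ht, by ext; simp⟩

variable {m : ℕ}

def e1 (m : ℕ) : Fin (m+4) ↪ Fin (m+5) := Fin.castLEEmb (by omega)
def e2 (m : ℕ) : Fin (m+3) ↪ Fin (m+5) := Fin.castLEEmb (by omega)

def Phi1 (m : ℕ) (t : Finset (Fin (m+4))) : Finset (Fin (m+5)) :=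
  insert ⟨m+4, by omega⟩ (t.map (e1 m))

def Psi1 (m : ℕ) (C : Finset (Fin (m+5))) : Finset (Fin (m+4)) :=
  univ.filter (fun j => (e1 m) j ∈ C)

def qpred (m : ℕ) (C : Finset (Fin (m+5))) : Prop :=
  (⟨m+4, by omega⟩ : Fin (m+5)) ∈ C ∧
    ((0 : Fin (m+5)) ∈ C ∨ (⟨m+3, by omega⟩ : Fin (m+5)) ∈ C)

instance (m : ℕ) (C : Finset (Fin (m+5))) : Decidable (qpred m C) :=
  inferInstanceAs (Decidable (_ ∧ _))

lemma mem_Phi1 {t : Finset (Fin (m+4))} (a : ℕ) (ha : a < m+5) :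
    ((⟨a, ha⟩ : Fin (m+5)) ∈ Phi1 m t) ↔ a = m+4 ∨ ∃ h : a < m+4, (⟨a, h⟩ : Fin (m+4)) ∈ t := by
  simp only [Phi1, e1]
  rw [Finset.mem_insert, mem_map_castLE, Fin.mk.injEq]

lemma mem_Psi1 {C : Finset (Fin (m+5))} (a : ℕ) (ha : a < m+4) :
    ((⟨a, ha⟩ : Fin (m+4)) ∈ Psi1 m C) ↔ (⟨a, by omega⟩ : Fin (m+5)) ∈ C := by
  unfold Psi1
  rw [Finset.mem_filter]
  simp only [Finset.mem_univ, true_and]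
  rfl

lemma card_Phi1 (t : Finset (Fin (m+4))) : (Phi1 m t).card = t.card + 1 := by
  simp only [Phi1, e1]
  rw [Finset.card_insert_of_notMem, Finset.card_map]
  rw [mem_map_castLE]
  rintro ⟨h, -⟩
  omega

lemma Phi1_mem_filter {t : Finset (Fin (m+4))} (ht : covP t) :
    covP (Phi1 m t) ∧ qpred m (Phi1 m t) := by
  constructor
  · apply covP_intro
    · intro a h1 h2
      rcases Nat.lt_or_ge a (m+3) with ha | ha
      · -- both a, a+1 < m+4 : use covP t
        rcases covP_elim ht a (by omega) (by omega) with h | h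
        · left; rw [mem_Phi1]; right; exact ⟨by omega, h⟩
        · right; rw [mem_Phi1]; right; exact ⟨by omega, h⟩
      · -- a = m+3 : a+1 = m+4 ∈ Phi1
        right; rw [mem_Phi1]; left; omega
    · left; rw [mem_Phi1]; left; rfl
  · constructor
    · rw [mem_Phi1]; left; rfl
    · rcases covP_elim_last (k := m+3) ht with h | h
      · right
        rw [show (⟨m+3, by omega⟩ : Fin (m+5)) = ⟨m+3, by omega⟩ from rfl, mem_Phi1]
        right; exact ⟨by omega, h⟩
      · left
        rw [show (0 : Fin (m+5)) = ⟨0, by omega⟩ from rfl, mem_Phi1]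
        right; exact ⟨by omega, h⟩

lemma Psi1_covP {C : Finset (Fin (m+5))} (hC : covP C) (hq : qpred m C) :
    covP (Psi1 m C) := by
  apply covP_intro
  · intro a h1 h2
    rcases covP_elim hC a (by omega) (by omega) with h | h
    · left; rw [mem_Psi1]; exact h
    · right; rw [mem_Psi1]; exact h
  · rcases hq.2 with h | h
    · right
      rw [show (0 : Fin (m+4)) = ⟨0, by omega⟩ from rfl, mem_Psi1]
      exact h
    · left
      rw [mem_Psi1]
      exact h

lemma Psi1_Phi1 (t : Finset (Fin (m+4))) : Psi1 m (Phi1 m t) = t := by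
  ext j
  obtain ⟨a, ha⟩ := j
  rw [mem_Psi1, mem_Phi1]
  constructor
  · rintro (h | ⟨h, hmem⟩)
    · omega
    · exact hmem
  · intro h
    right; exact ⟨ha, h⟩

lemma Phi1_Psi1 {C : Finset (Fin (m+5))} (hq : qpred m C) : Phi1 m (Psi1 m C) = C := by
  ext i
  obtain ⟨a, ha⟩ := i
  rw [mem_Phi1]
  constructor
  · rintro (rfl | ⟨h, hmem⟩)
    · exact hq.1
    · rwa [mem_Psi1] at hmem
  · intro h
    rcases Nat.lt_or_ge a (m+4) with h' | h'
    · right; refine ⟨h', ?_⟩; rw [mem_Psi1]; exact h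
    · left; omega

lemma claim1 (m : ℕ) :
    ∑ t ∈ univ.filter (fun t : Finset (Fin (m+4)) => covP t), (X : Polynomial ℕ) ^ (t.card + 1)
      = ∑ C ∈ (univ.filter (fun C : Finset (Fin (m+5)) => covP C)).filter (fun C => qpred m C),
          X ^ C.card := by
  apply Finset.sum_nbij' (Phi1 m) (Psi1 m)
  · intro t ht
    simp only [Finset.mem_filter, Finset.mem_univ, true_and] at ht ⊢
    obtain ⟨h1, h2⟩ := Phi1_mem_filter ht
    exact ⟨h1, h2⟩
  · intro C hC
    simp only [Finset.mem_filter, Finset.mem_univ, true_and] at hC ⊢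
    exact Psi1_covP hC.1 hC.2
  · intro t _
    exact Psi1_Phi1 t
  · intro C hC
    simp only [Finset.mem_filter, Finset.mem_univ, true_and] at hC
    exact Phi1_Psi1 hC.2
  · intro t _
    rw [card_Phi1]

def Phi2 (m : ℕ) (u : Finset (Fin (m+3))) : Finset (Fin (m+5)) :=
  if (0 : Fin (m+3)) ∈ u then insert ⟨m+3, by omega⟩ (u.map (e2 m))
  else insert ⟨m+4, by omega⟩ (u.map (e2 m))

def Psi2 (m : ℕ) (C : Finset (Fin (m+5))) : Finset (Fin (m+3)) :=
  univ.filter (fun j => (e2 m) j ∈ C)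

lemma mem_Phi2 {u : Finset (Fin (m+3))} (a : ℕ) (ha : a < m+5) :
    ((⟨a, ha⟩ : Fin (m+5)) ∈ Phi2 m u) ↔
      (∃ h : a < m+3, (⟨a, h⟩ : Fin (m+3)) ∈ u) ∨
      ((0 : Fin (m+3)) ∈ u ∧ a = m+3) ∨ ((0 : Fin (m+3)) ∉ u ∧ a = m+4) := by
  simp only [Phi2, e2]
  split_ifs with h0
  · rw [Finset.mem_insert, mem_map_castLE, Fin.mk.injEq]
    constructor
    · rintro (rfl | h)
      · exact Or.inr (Or.inl ⟨h0, rfl⟩)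
      · exact Or.inl h
    · rintro (h | ⟨-, rfl⟩ | ⟨hn, rfl⟩)
      · exact Or.inr h
      · exact Or.inl rfl
      · exact absurd h0 hn
  · rw [Finset.mem_insert, mem_map_castLE, Fin.mk.injEq]
    constructor
    · rintro (rfl | h)
      · exact Or.inr (Or.inr ⟨h0, rfl⟩)
      · exact Or.inl h
    · rintro (h | ⟨hy, rfl⟩ | ⟨-, rfl⟩)
      · exact Or.inr h
      · exact absurd hy h0
      · exact Or.inl rfl

lemma mem_Psi2 {C : Finset (Fin (m+5))} (a : ℕ) (ha : a < m+3) :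
    ((⟨a, ha⟩ : Fin (m+3)) ∈ Psi2 m C) ↔ (⟨a, by omega⟩ : Fin (m+5)) ∈ C := by
  unfold Psi2
  rw [Finset.mem_filter]
  simp only [Finset.mem_univ, true_and]
  rfl

lemma zero_mem_Psi2 {C : Finset (Fin (m+5))} :
    ((0 : Fin (m+3)) ∈ Psi2 m C) ↔ (0 : Fin (m+5)) ∈ C := by
  rw [show (0 : Fin (m+3)) = ⟨0, by omega⟩ from rfl, mem_Psi2]
  rfl

lemma card_Phi2 (u : Finset (Fin (m+3))) : (Phi2 m u).card = u.card + 1 := by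
  simp only [Phi2, e2]
  split_ifs with h0 <;>
  · rw [Finset.card_insert_of_notMem, Finset.card_map]
    rw [mem_map_castLE]
    rintro ⟨h, -⟩
    omega

lemma Phi2_mem_filter {u : Finset (Fin (m+3))} (hu : covP u) :
    covP (Phi2 m u) ∧ ¬ qpred m (Phi2 m u) := by
  constructor
  · apply covP_intro
    · intro a h1 h2
      rcases Nat.lt_or_ge a (m+2) with ha | ha
      · rcases covP_elim hu a (by omega) (by omega) with h | h
        · left; rw [mem_Phi2]; exact Or.inl ⟨by omega, h⟩
        · right; rw [mem_Phi2]; exact Or.inl ⟨by omega, h⟩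
      · rcases Nat.lt_or_ge a (m+3) with ha' | ha'
        · -- a = m+2
          have haa : a = m+2 := by omega
          subst haa
          by_cases h0 : (0 : Fin (m+3)) ∈ u
          · right; rw [mem_Phi2]; exact Or.inr (Or.inl ⟨h0, by omega⟩)
          · rcases covP_elim_last (k := m+2) hu with h | h
            · left; rw [mem_Phi2]; exact Or.inl ⟨by omega, h⟩
            · exact absurd h h0
        · -- a = m+3
          have haa : a = m+3 := by omega
          subst haa
          by_cases h0 : (0 : Fin (m+3)) ∈ u
          · left; rw [mem_Phi2]; exact Or.inr (Or.inl ⟨h0, rfl⟩)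
          · right; rw [mem_Phi2]; exact Or.inr (Or.inr ⟨h0, rfl⟩)
    · by_cases h0 : (0 : Fin (m+3)) ∈ u
      · right
        rw [show (0 : Fin (m+5)) = ⟨0, by omega⟩ from rfl, mem_Phi2]
        exact Or.inl ⟨by omega, h0⟩
      · left
        rw [mem_Phi2]
        exact Or.inr (Or.inr ⟨h0, rfl⟩)
  · intro hq
    obtain ⟨h4, h03⟩ := hq
    rw [mem_Phi2] at h4
    by_cases h0 : (0 : Fin (m+3)) ∈ u
    · rcases h4 with ⟨h, -⟩ | ⟨-, h⟩ | ⟨hn, -⟩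
      · omega
      · omega
      · exact hn h0
    · rcases h03 with h | h
      · rw [show (0 : Fin (m+5)) = ⟨0, by omega⟩ from rfl, mem_Phi2] at h
        rcases h with ⟨h', hm⟩ | ⟨-, h'⟩ | ⟨-, h'⟩
        · exact h0 hm
        · omega
        · omega
      · rw [mem_Phi2] at h
        rcases h with ⟨h', -⟩ | ⟨hy, -⟩ | ⟨-, h'⟩
        · omega
        · exact h0 hy
        · omega

lemma Psi2_covP {C : Finset (Fin (m+5))} (hC : covP C) (hq : ¬ qpred m C) :
    covP (Psi2 m C) := by
  apply covP_intro
  · intro a h1 h2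
    rcases covP_elim hC a (by omega) (by omega) with h | h
    · left; rw [mem_Psi2]; exact h
    · right; rw [mem_Psi2]; exact h
  · by_cases h4 : (⟨m+4, by omega⟩ : Fin (m+5)) ∈ C
    · have h03 : ¬ ((0 : Fin (m+5)) ∈ C ∨ (⟨m+3, by omega⟩ : Fin (m+5)) ∈ C) :=
        fun h => hq ⟨h4, h⟩
      push_neg at h03
      rcases covP_elim hC (m+2) (by omega) (by omega) with h | h
      · left; rw [mem_Psi2]; exact h
      · exact absurd h h03.2
    · right
      rw [zero_mem_Psi2]
      rcases covP_elim_last (k := m+4) hC with h | h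
      · exact absurd h h4
      · exact h

lemma Psi2_Phi2 (u : Finset (Fin (m+3))) : Psi2 m (Phi2 m u) = u := by
  ext j
  obtain ⟨a, ha⟩ := j
  rw [mem_Psi2, mem_Phi2]
  constructor
  · rintro (⟨h, hm⟩ | ⟨-, h⟩ | ⟨-, h⟩)
    · exact hm
    · omega
    · omega
  · intro h
    exact Or.inl ⟨ha, h⟩

lemma Phi2_Psi2 {C : Finset (Fin (m+5))} (hC : covP C) (hq : ¬ qpred m C) :
    Phi2 m (Psi2 m C) = C := by
  by_cases h4 : (⟨m+4, by omega⟩ : Fin (m+5)) ∈ C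
  · have h03 : ¬ ((0 : Fin (m+5)) ∈ C ∨ (⟨m+3, by omega⟩ : Fin (m+5)) ∈ C) :=
      fun h => hq ⟨h4, h⟩
    push_neg at h03
    ext i
    obtain ⟨a, ha⟩ := i
    rw [mem_Phi2, zero_mem_Psi2]
    constructor
    · rintro (⟨h, hm⟩ | ⟨h0, -⟩ | ⟨-, rfl⟩)
      · rwa [mem_Psi2] at hm
      · exact absurd h0 h03.1
      · exact h4
    · intro h
      rcases Nat.lt_or_ge a (m+3) with h' | h'
      · exact Or.inl ⟨h', by rw [mem_Psi2]; exact h⟩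
      · rcases Nat.lt_or_ge a (m+4) with h'' | h''
        · have : a = m+3 := by omega
          subst this
          exact absurd h h03.2
        · have : a = m+4 := by omega
          subst this
          exact Or.inr (Or.inr ⟨fun hz => h03.1 hz, rfl⟩)
  · have h0C : (0 : Fin (m+5)) ∈ C := by
      rcases covP_elim_last (k := m+4) hC with h | h
      · exact absurd h h4
      · exact h
    have h3C : (⟨m+3, by omega⟩ : Fin (m+5)) ∈ C := by
      rcases covP_elim hC (m+3) (by omega) (by omega) with h | h
      · exact h
      · exact absurd h h4
    ext i
    obtain ⟨a, ha⟩ := i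
    rw [mem_Phi2, zero_mem_Psi2]
    constructor
    · rintro (⟨h, hm⟩ | ⟨-, rfl⟩ | ⟨hn, -⟩)
      · rwa [mem_Psi2] at hm
      · exact h3C
      · exact absurd h0C hn
    · intro h
      rcases Nat.lt_or_ge a (m+3) with h' | h'
      · exact Or.inl ⟨h', by rw [mem_Psi2]; exact h⟩
      · rcases Nat.lt_or_ge a (m+4) with h'' | h''
        · have : a = m+3 := by omega
          subst this
          exact Or.inr (Or.inl ⟨h0C, rfl⟩)
        · have : a = m+4 := by omega
          subst this
          exact absurd h h4

lemma claim2 (m : ℕ) :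
    ∑ u ∈ univ.filter (fun u : Finset (Fin (m+3)) => covP u), (X : Polynomial ℕ) ^ (u.card + 1)
      = ∑ C ∈ (univ.filter (fun C : Finset (Fin (m+5)) => covP C)).filter
          (fun C => ¬ qpred m C), X ^ C.card := by
  apply Finset.sum_nbij' (Phi2 m) (Psi2 m)
  · intro u hu
    simp only [Finset.mem_filter, Finset.mem_univ, true_and] at hu ⊢
    exact Phi2_mem_filter hu
  · intro C hC
    simp only [Finset.mem_filter, Finset.mem_univ, true_and] at hC ⊢
    exact Psi2_covP hC.1 hC.2
  · intro u _
    exact Psi2_Phi2 u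
  · intro C hC
    simp only [Finset.mem_filter, Finset.mem_univ, true_and] at hC
    exact Phi2_Psi2 hC.1 hC.2
  · intro u _
    rw [card_Phi2]

lemma g_rec (m : ℕ) : g (m+2) = X * g (m+1) + X * g m := by
  have key : (∑ C ∈ univ.filter (fun C : Finset (Fin (m+5)) => covP C), (X:Polynomial ℕ) ^ C.card)
      = X * (∑ t ∈ univ.filter (fun t : Finset (Fin (m+4)) => covP t), (X:Polynomial ℕ) ^ t.card)
        + X * (∑ u ∈ univ.filter (fun u : Finset (Fin (m+3)) => covP u), (X:Polynomial ℕ) ^ u.card) := by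
    rw [← Finset.sum_filter_add_sum_filter_not
      (univ.filter (fun C : Finset (Fin (m+5)) => covP C)) (fun C => qpred m C)
      (fun C => (X:Polynomial ℕ) ^ C.card)]
    rw [← claim1 m, ← claim2 m, Finset.mul_sum, Finset.mul_sum]
    congr 1 <;> exact Finset.sum_congr rfl (fun t _ => by ring)
  exact key

theorem floodPoly_cycle_recurrence :
    floodPoly (SimpleGraph.cycleGraph 3) =
      Polynomial.X ^ 3 + 3 * Polynomial.X ^ 2 ∧
    floodPoly (SimpleGraph.cycleGraph 4) =
      Polynomial.X ^ 4 + 4 * Polynomial.X ^ 3 + 2 * Polynomial.X ^ 2 ∧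
    ∀ n : ℕ, 5 ≤ n →
      floodPoly (SimpleGraph.cycleGraph n) =
        Polynomial.X * floodPoly (SimpleGraph.cycleGraph (n - 1)) +
          Polynomial.X * floodPoly (SimpleGraph.cycleGraph (n - 2)) := by
  refine ⟨?_, ?_, ?_⟩
  · rw [(floodPoly_eq_g 0 : floodPoly (SimpleGraph.cycleGraph 3) = g 0), g0]
  · rw [(floodPoly_eq_g 1 : floodPoly (SimpleGraph.cycleGraph 4) = g 1), g1]
  · intro n hn
    obtain ⟨m, rfl⟩ : ∃ m, n = m + 5 := ⟨n - 5, by omega⟩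
    have ha : floodPoly (SimpleGraph.cycleGraph (m+5)) = g (m+2) := floodPoly_eq_g (m+2)
    have hb : floodPoly (SimpleGraph.cycleGraph (m+5-1)) = g (m+1) := floodPoly_eq_g (m+1)
    have hc : floodPoly (SimpleGraph.cycleGraph (m+5-2)) = g m := floodPoly_eq_g m
    rw [ha, hb, hc, g_rec]
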